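/- Let c : ℝ → ℝ be continuously differentiable with constants 0 < m ≤ c(x) ≤ M and |c'(x)| ≤ L for all x ∈ ℝ, and let g : ℝ → ℂ be continuously differentiable. Then there exists a differentiable function w : ℝ × ℝ → ℂ such that w(x, 0) = g(x) for all x ∈ ℝ and ∂_t w(x,t) + c(x)·∂_x w(x,t) = 0 for all (x,t) ∈ ℝ × ℝ. (Existence part of Theorem 13 in logarithmic coordinates: w = log v where v solves the multiplicative advection equation v*_t (v*_x)^c = 1 with v(·,0) = exp∘g.) -/

import Mathlib

/-- Existence part of Theorem 13 in logarithmic coordinates: for a continuously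
differentiable wave speed `c` bounded between positive constants with bounded derivative and
continuously differentiable initial data `g`, there is a differentiable solution `w` of the
advection equation `w_t + c(x)·w_x = 0` with `w(·,0) = g`. -/
theorem advection_existence (c : ℝ → ℝ) (m M L : ℝ) (hm : 0 < m)
    (hc : ContDiff ℝ 1 c)
    (hbound : ∀ x, m ≤ c x ∧ c x ≤ M) (hL : ∀ x, |deriv c x| ≤ L)
    (g : ℝ → ℂ) (hg : ContDiff ℝ 1 g) :
    ∃ w : ℝ × ℝ → ℂ, Differentiable ℝ w ∧ (∀ x : ℝ, w (x, 0) = g x) ∧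
      ∀ x t : ℝ, deriv (fun s => w (x, s)) t + (c x : ℂ) * deriv (fun y => w (y, t)) x = 0 := by
  have hcpos : ∀ x, 0 < c x := fun x => hm.trans_le (hbound x).1
  have hM : 0 < M := hm.trans_le ((hbound 0).1.trans (hbound 0).2)
  have hccont : Continuous c := hc.continuous
  have hinvcont : Continuous fun x => (c x)⁻¹ := hccont.inv₀ fun x => (hcpos x).ne'
  set φ : ℝ → ℝ := fun x => ∫ s in (0:ℝ)..x, (c s)⁻¹ with hφdef
  have hφderiv : ∀ x, HasDerivAt φ (c x)⁻¹ x := fun x =>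
    (hinvcont.integral_hasStrictDerivAt 0 x).hasDerivAt
  have hφdiff : Differentiable ℝ φ := fun x => (hφderiv x).differentiableAt
  have hφd : ∀ x, deriv φ x = (c x)⁻¹ := fun x => (hφderiv x).deriv
  have hmono : StrictMono φ := by
    apply strictMono_of_deriv_pos
    intro x
    rw [hφd x]
    exact inv_pos.mpr (hcpos x)
  -- bounds on φ
  have hbnd_pos : ∀ x : ℝ, 0 ≤ x → x / M ≤ φ x := by
    intro x hx
    have : ∫ s in (0:ℝ)..x, M⁻¹ ≤ ∫ s in (0:ℝ)..x, (c s)⁻¹ := by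
      apply intervalIntegral.integral_mono_on hx intervalIntegrable_const
        (hinvcont.intervalIntegrable 0 x)
      intro s _
      exact inv_anti₀ (hcpos s) (hbound s).2
    simpa [div_eq_mul_inv, mul_comm] using this
  have hbnd_neg : ∀ x : ℝ, x ≤ 0 → φ x ≤ x / M := by
    intro x hx
    have h1 : ∫ s in x..(0:ℝ), (c s)⁻¹ ≥ ∫ s in x..(0:ℝ), M⁻¹ := by
      apply intervalIntegral.integral_mono_on hx
        intervalIntegrable_const (hinvcont.intervalIntegrable x 0)
      intro s _
      exact inv_anti₀ (hcpos s) (hbound s).2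
    have h2 : φ x = -∫ s in x..(0:ℝ), (c s)⁻¹ := by
      exact intervalIntegral.integral_symm x 0
    rw [h2]
    have : (-x) * M⁻¹ ≤ ∫ s in x..(0:ℝ), (c s)⁻¹ := by
      calc (-x) * M⁻¹ = ∫ s in x..(0:ℝ), M⁻¹ := by simp [mul_comm]
        _ ≤ _ := h1
    have := neg_le_neg this
    rw [div_eq_mul_inv]
    linarith
  have htop : Filter.Tendsto φ Filter.atTop Filter.atTop := by
    apply Filter.tendsto_atTop_mono' _ _ (Filter.tendsto_id.atTop_div_const hM)
    filter_upwards [Filter.eventually_ge_atTop (0:ℝ)] with x hx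
    exact hbnd_pos x hx
  have hbot : Filter.Tendsto φ Filter.atBot Filter.atBot := by
    apply Filter.tendsto_atBot_mono' _ _ (Filter.tendsto_id.atBot_div_const hM)
    filter_upwards [Filter.eventually_le_atBot (0:ℝ)] with x hx
    exact hbnd_neg x hx
  have hsurj : Function.Surjective φ := hφdiff.continuous.surjective htop hbot
  set e : ℝ ≃o ℝ := StrictMono.orderIsoOfSurjective φ hmono hsurj with hedef
  set ψ : ℝ → ℝ := fun y => e.symm y with hψdef
  have hφψ : ∀ y, φ (ψ y) = y := fun y =>
    StrictMono.orderIsoOfSurjective_self_symm_apply φ hmono hsurj y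
  have hψφ : ∀ x, ψ (φ x) = x := fun x =>
    StrictMono.orderIsoOfSurjective_symm_apply_self φ hmono hsurj x
  have hψcont : Continuous ψ := (e.symm : ℝ ≃o ℝ).continuous
  have hψderiv : ∀ y, HasDerivAt ψ (c (ψ y)) y := by
    intro y
    have := HasDerivAt.of_local_left_inverse (f := φ) (g := ψ) (hψcont.continuousAt)
      (hφderiv (ψ y)) (inv_ne_zero (hcpos (ψ y)).ne')
      (Filter.Eventually.of_forall hφψ)
    simpa using this
  have hgdiff : Differentiable ℝ g := hg.differentiable one_ne_zero
  set H : ℝ → ℂ := fun a => g (ψ a) with hHdef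
  set H' : ℝ → ℂ := fun a => c (ψ a) • deriv g (ψ a) with hH'def
  have hHderiv : ∀ a, HasDerivAt H (H' a) a := fun a =>
    ((hgdiff (ψ a)).hasDerivAt).scomp a (hψderiv a)
  refine ⟨fun p => H (φ p.1 - p.2), ?_, ?_, ?_⟩
  · have hHdiff : Differentiable ℝ H := fun a => (hHderiv a).differentiableAt
    exact hHdiff.comp ((hφdiff.comp differentiable_fst).sub differentiable_snd)
  · intro x
    simp only [sub_zero, hHdef, hψφ]
  · intro x t
    have h1 : HasDerivAt (fun s : ℝ => H (φ x - s)) ((-1 : ℝ) • H' (φ x - t)) t := by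
      have hin : HasDerivAt (fun s : ℝ => φ x - s) (-1) t := by
        simpa using (hasDerivAt_id t).const_sub (φ x)
      exact (hHderiv (φ x - t)).scomp t hin
    have h2 : HasDerivAt (fun y : ℝ => H (φ y - t)) ((c x)⁻¹ • H' (φ x - t)) x := by
      have hin : HasDerivAt (fun y : ℝ => φ y - t) ((c x)⁻¹) x := (hφderiv x).sub_const t
      exact HasDerivAt.scomp (g₁ := H) (h := fun y : ℝ => φ y - t) x (hHderiv (φ x - t)) hin
    rw [h1.deriv, h2.deriv]
    rw [Complex.real_smul, Complex.real_smul]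
    push_cast
    have : (c x : ℂ) ≠ 0 := by exact_mod_cast (hcpos x).ne'
    field_simp
    ring
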